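/- Let m ≥ 2, let I and J be finite types, and let A : Fin m → ((Fin m → I) → ℂ) and B : Fin m → ((Fin m → J) → ℂ) be m-tuples of order-m cubic hypermatrices. Then the BM product of the tuple of direct sums equals the direct sum of the BM products: Prod(fun t => A t ⊕ B t) = Prod(A) ⊕ Prod(B). -/

import Mathlib

/-- The BM product of an `m`-tuple of order-`m` cubic hypermatrices over index type `I`. -/
noncomputable def bmProd {m : ℕ} [NeZero m] {I : Type*} [Fintype I] [DecidableEq I]
    (A : Fin m → ((Fin m → I) → ℂ)) : (Fin m → I) → ℂ :=
  fun i => ∑ j : I, ∏ t : Fin m, A t (Function.update i (t + 1) j)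

open Classical in
/-- The direct sum of order-`m` hypermatrices: `(A ⊕ B)(inl ∘ a) = A a`,
`(A ⊕ B)(inr ∘ b) = B b`, and `0` on mixed indices. -/
noncomputable def hDirectSum {m : ℕ} {I J : Type*}
    (A : (Fin m → I) → ℂ) (B : (Fin m → J) → ℂ) : (Fin m → I ⊕ J) → ℂ := fun i =>
  if h : ∃ a : Fin m → I, i = Sum.inl ∘ a then A h.choose
  else if h' : ∃ b : Fin m → J, i = Sum.inr ∘ b then B h'.choose
  else 0

lemma hDirectSum_inl {m : ℕ} {I J : Type*}
    (A : (Fin m → I) → ℂ) (B : (Fin m → J) → ℂ) (a : Fin m → I) :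
    hDirectSum A B (Sum.inl ∘ a) = A a := by
  have h : ∃ a' : Fin m → I, (Sum.inl ∘ a : Fin m → I ⊕ J) = Sum.inl ∘ a' := ⟨a, rfl⟩
  simp only [hDirectSum, dif_pos h]
  congr 1
  funext t
  exact (Sum.inl.inj (congrFun h.choose_spec t)).symm

lemma hDirectSum_inr {m : ℕ} [NeZero m] {I J : Type*}
    (A : (Fin m → I) → ℂ) (B : (Fin m → J) → ℂ) (b : Fin m → J) :
    hDirectSum A B (Sum.inr ∘ b) = B b := by
  have h0 : ¬ ∃ a' : Fin m → I, (Sum.inr ∘ b : Fin m → I ⊕ J) = Sum.inl ∘ a' := by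
    rintro ⟨a', ha⟩
    exact Sum.inr_ne_inl (congrFun ha 0)
  have h : ∃ b' : Fin m → J, (Sum.inr ∘ b : Fin m → I ⊕ J) = Sum.inr ∘ b' := ⟨b, rfl⟩
  simp only [hDirectSum, dif_neg h0, dif_pos h]
  congr 1
  funext t
  exact (Sum.inr.inj (congrFun h.choose_spec t)).symm

lemma hDirectSum_mixed {m : ℕ} {I J : Type*}
    (A : (Fin m → I) → ℂ) (B : (Fin m → J) → ℂ) (i : Fin m → I ⊕ J)
    {s s' : Fin m} {x : I} {y : J} (hs : i s = Sum.inl x) (hs' : i s' = Sum.inr y) :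
    hDirectSum A B i = 0 := by
  have h0 : ¬ ∃ a' : Fin m → I, i = Sum.inl ∘ a' := by
    rintro ⟨a', ha⟩
    rw [ha] at hs'
    exact Sum.inl_ne_inr hs'
  have h1 : ¬ ∃ b' : Fin m → J, i = Sum.inr ∘ b' := by
    rintro ⟨b', hb⟩
    rw [hb] at hs
    exact Sum.inr_ne_inl hs
  simp only [hDirectSum, dif_neg h0, dif_neg h1]

/-- The BM product of a tuple of direct sums is the direct sum of the BM products. -/
theorem bmProd_directSum {m : ℕ} [NeZero m] (hm : 2 ≤ m)
    {I J : Type*} [Fintype I] [DecidableEq I] [Fintype J] [DecidableEq J]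
    (A : Fin m → ((Fin m → I) → ℂ)) (B : Fin m → ((Fin m → J) → ℂ)) :
    bmProd (fun t => hDirectSum (A t) (B t)) = hDirectSum (bmProd A) (bmProd B) := by
  have hone : (1 : Fin m) ≠ 0 := by
    simp [Fin.ext_iff, Nat.mod_eq_of_lt hm]
  have hsucc : ∀ k : Fin m, k + 1 ≠ k := by
    intro k h
    apply hone
    have : k + 1 = k + 0 := by rw [add_zero]; exact h
    exact add_left_cancel this
  funext i
  by_cases hL : ∀ t, ∃ x : I, i t = Sum.inl x
  · -- all-left case
    obtain ⟨a, hia⟩ : ∃ a : Fin m → I, i = Sum.inl ∘ a :=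
      ⟨fun t => (hL t).choose, funext fun t => (hL t).choose_spec⟩
    subst hia
    rw [hDirectSum_inl]
    show (∑ j : I ⊕ J, ∏ t : Fin m,
        hDirectSum (A t) (B t) (Function.update (Sum.inl ∘ a) (t + 1) j)) = bmProd A a
    rw [Fintype.sum_sum_type]
    have h1 : ∀ j : I, (∏ t : Fin m,
        hDirectSum (A t) (B t) (Function.update (Sum.inl ∘ a) (t + 1) (Sum.inl j)))
        = ∏ t : Fin m, A t (Function.update a (t + 1) j) := by
      intro j
      apply Finset.prod_congr rfl
      intro t _
      rw [← Function.comp_update, hDirectSum_inl]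
    have h2 : ∀ j : J, (∏ t : Fin m,
        hDirectSum (A t) (B t) (Function.update (Sum.inl ∘ a) (t + 1) (Sum.inr j))) = 0 := by
      intro j
      apply Finset.prod_eq_zero (Finset.mem_univ (0 : Fin m))
      refine hDirectSum_mixed _ _ _ (s := (0 : Fin m)) (s' := (0 : Fin m) + 1)
        (x := a 0) (y := j) ?_ ?_
      · rw [Function.update_of_ne (Ne.symm (hsucc 0))]; rfl
      · rw [Function.update_self]
    simp only [h1, h2, Finset.sum_const_zero, add_zero]
    rfl
  · by_cases hR : ∀ t, ∃ y : J, i t = Sum.inr y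
    · -- all-right case
      obtain ⟨b, hib⟩ : ∃ b : Fin m → J, i = Sum.inr ∘ b :=
        ⟨fun t => (hR t).choose, funext fun t => (hR t).choose_spec⟩
      subst hib
      rw [hDirectSum_inr]
      show (∑ j : I ⊕ J, ∏ t : Fin m,
          hDirectSum (A t) (B t) (Function.update (Sum.inr ∘ b) (t + 1) j)) = bmProd B b
      rw [Fintype.sum_sum_type]
      have h1 : ∀ j : I, (∏ t : Fin m,
          hDirectSum (A t) (B t) (Function.update (Sum.inr ∘ b) (t + 1) (Sum.inl j))) = 0 := by
        intro j
        apply Finset.prod_eq_zero (Finset.mem_univ (0 : Fin m))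
        refine hDirectSum_mixed _ _ _ (s := (0 : Fin m) + 1) (s' := (0 : Fin m))
          (x := j) (y := b 0) ?_ ?_
        · rw [Function.update_self]
        · rw [Function.update_of_ne (Ne.symm (hsucc 0))]; rfl
      have h2 : ∀ j : J, (∏ t : Fin m,
          hDirectSum (A t) (B t) (Function.update (Sum.inr ∘ b) (t + 1) (Sum.inr j)))
          = ∏ t : Fin m, B t (Function.update b (t + 1) j) := by
        intro j
        apply Finset.prod_congr rfl
        intro t _
        rw [← Function.comp_update, hDirectSum_inr]
      simp only [h1, h2, Finset.sum_const_zero, zero_add]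
      rfl
    · -- mixed case
      push_neg at hL hR
      obtain ⟨s', hs'⟩ := hL
      obtain ⟨s, hs⟩ := hR
      -- i s' is not inl for any x, so it is inr of something
      obtain ⟨y, hy⟩ : ∃ y : J, i s' = Sum.inr y := by
        cases h : i s' with
        | inl x => exact absurd h (hs' x)
        | inr y => exact ⟨y, rfl⟩
      obtain ⟨x, hx⟩ : ∃ x : I, i s = Sum.inl x := by
        cases h : i s with
        | inl x => exact ⟨x, rfl⟩
        | inr y => exact absurd h (hs y)
      rw [hDirectSum_mixed _ _ _ hx hy]
      show (∑ j : I ⊕ J, ∏ t : Fin m,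
          hDirectSum (A t) (B t) (Function.update i (t + 1) j)) = 0
      apply Finset.sum_eq_zero
      intro j _
      cases j with
      | inl v =>
        apply Finset.prod_eq_zero (Finset.mem_univ s')
        refine hDirectSum_mixed _ _ _ (s := s' + 1) (s' := s') (x := v) (y := y) ?_ ?_
        · rw [Function.update_self]
        · rw [Function.update_of_ne (Ne.symm (hsucc s'))]; exact hy
      | inr w =>
        apply Finset.prod_eq_zero (Finset.mem_univ s)
        refine hDirectSum_mixed _ _ _ (s := s) (s' := s + 1) (x := x) (y := w) ?_ ?_
        · rw [Function.update_of_ne (Ne.symm (hsucc s))]; exact hx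
        · rw [Function.update_self]
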